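/- Let (G,P) be a left-ordered group and z ∈ P a central element with z > 1. Define G' = {g ∈ G : ∃n ∈ ℕ, z^{−n} ≤ g ≤ z^n}. Then G' is a subgroup of G, and every element of G' can be written uniquely as z^k·v with k ∈ ℤ and v ∈ [1, z) = {x : 1 ≤ x < z}. -/

import Mathlib

/-- The left-invariant order on a left-ordered group `(G,P)`: `a ≤ b ↔ a⁻¹b ∈ P`. -/
def leP {G : Type*} [Group G] (P : Set G) (a b : G) : Prop := a⁻¹ * b ∈ P

/-- `G' = {g : ∃ n ∈ ℕ, z^{-n} ≤ g ≤ z^n}`. -/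
def Gprime {G : Type*} [Group G] (P : Set G) (z : G) : Set G :=
  {g | ∃ n : ℕ, leP P (z ^ (-(n : ℤ))) g ∧ leP P g (z ^ (n : ℤ))}

/-- For a left-ordered group `(G,P)` and a central `z > 1`, the set `G'` is a subgroup,
and every element of `G'` is uniquely `z^k · v` with `k ∈ ℤ`, `v ∈ [1, z)`. -/
theorem stmt9 (G : Type*) [Group G] (P : Set G)
    (hP1 : ∀ a ∈ P, ∀ b ∈ P, a * b ∈ P)
    (hP2 : P ∩ P⁻¹ = {1}) (hP3 : P ∪ P⁻¹ = Set.univ)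
    (z : G) (hz : z ∈ P) (hz1 : z ≠ 1) (hzc : ∀ g : G, g * z = z * g) :
    (∃ H : Subgroup G, (H : Set G) = Gprime P z) ∧
    (∀ g ∈ Gprime P z, ∃! p : ℤ × G,
      g = z ^ p.1 * p.2 ∧ leP P 1 p.2 ∧ leP P p.2 z ∧ p.2 ≠ z) := by
  classical
  -- 1 ∈ P
  have h1P : (1 : G) ∈ P := by
    have h := Set.mem_univ (1 : G)
    rw [← hP3] at h
    rcases h with h | h
    · exact h
    · simpa using h
  -- commutation
  have hcomm : ∀ (m : ℤ) (g : G), z ^ m * g = g * z ^ m := by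
    intro m g
    have hc : Commute g z := hzc g
    exact ((hc.zpow_right m)).symm
  -- antisymmetry
  have hanti : ∀ a b : G, leP P a b → leP P b a → a = b := by
    intro a b hab hba
    have h1 : a⁻¹ * b ∈ P := hab
    have h2 : a⁻¹ * b ∈ P⁻¹ := by
      rw [Set.mem_inv]
      rw [mul_inv_rev, inv_inv]
      exact hba
    have h3 : a⁻¹ * b ∈ P ∩ P⁻¹ := ⟨h1, h2⟩
    rw [hP2] at h3
    have : a⁻¹ * b = 1 := h3
    have := mul_eq_one_iff_eq_inv.mp this
    simpa [eq_comm] using (inv_eq_iff_eq_inv.mp this.symm).symm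
  -- totality
  have htot : ∀ a b : G, leP P a b ∨ leP P b a := by
    intro a b
    have h := Set.mem_univ (a⁻¹ * b)
    rw [← hP3] at h
    rcases h with h | h
    · exact Or.inl h
    · right
      rw [Set.mem_inv, mul_inv_rev, inv_inv] at h
      exact h
  -- positive powers of z lie in P
  have hzpow : ∀ m : ℤ, 0 ≤ m → z ^ m ∈ P := by
    intro m hm
    lift m to ℕ using hm
    rw [zpow_natCast]
    induction m with
    | zero => simpa using h1P
    | succ k ih =>
      rw [pow_succ]
      exact hP1 _ ih _ hz
  -- z^m ∈ P implies m ≥ 0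
  have hnonneg : ∀ m : ℤ, z ^ m ∈ P → 0 ≤ m := by
    intro m hm
    by_contra h
    push_neg at h
    have h1 : z ^ (-m) ∈ P := hzpow _ (by omega)
    have h2 : z ^ (-m) ∈ P⁻¹ := by
      rw [Set.mem_inv, ← zpow_neg, neg_neg]
      exact hm
    have h3 : z ^ (-m) ∈ P ∩ P⁻¹ := ⟨h1, h2⟩
    rw [hP2] at h3
    have h3 : z ^ (-m) = 1 := h3
    have h4 : z ^ (-m - 1) ∈ P := hzpow _ (by omega)
    have h5 : z ^ (-m - 1) = z⁻¹ := by
      apply eq_inv_of_mul_eq_one_left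
      have e : z ^ (-m - 1) * z ^ (1 : ℤ) = z ^ (-m) := by rw [← zpow_add]; norm_num
      rw [zpow_one] at e
      rw [e, h3]
    rw [h5] at h4
    have h6 : z ∈ P ∩ P⁻¹ := ⟨hz, by rwa [Set.mem_inv]⟩
    rw [hP2] at h6
    exact hz1 h6
  constructor
  · -- subgroup
    have hone : (1 : G) ∈ Gprime P z :=
      ⟨0, by simpa [leP] using h1P, by simpa [leP] using h1P⟩
    have hmul : ∀ a b : G, a ∈ Gprime P z → b ∈ Gprime P z → a * b ∈ Gprime P z := by
      rintro a b ⟨n, hna, hna'⟩ ⟨m, hmb, hmb'⟩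
      have ha : z ^ (n : ℤ) * a ∈ P := by
        have := hna; unfold leP at this; rwa [zpow_neg, inv_inv] at this
      have hb : z ^ (m : ℤ) * b ∈ P := by
        have := hmb; unfold leP at this; rwa [zpow_neg, inv_inv] at this
      refine ⟨n + m, ?_, ?_⟩
      · unfold leP
        rw [zpow_neg, inv_inv]
        have e : z ^ ((n + m : ℕ) : ℤ) * (a * b) = (z ^ (n:ℤ) * a) * (z ^ (m:ℤ) * b) := by
          push_cast
          rw [zpow_add]
          calc z ^ (n:ℤ) * z ^ (m:ℤ) * (a * b)
              = z ^ (n:ℤ) * ((z ^ (m:ℤ) * a) * b) := by simp only [mul_assoc]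
            _ = z ^ (n:ℤ) * ((a * z ^ (m:ℤ)) * b) := by rw [hcomm (m:ℤ) a]
            _ = (z ^ (n:ℤ) * a) * (z ^ (m:ℤ) * b) := by simp only [mul_assoc]
        rw [e]
        exact hP1 _ ha _ hb
      · unfold leP
        have e : (a * b)⁻¹ * z ^ ((n + m : ℕ) : ℤ) = (b⁻¹ * z ^ (m:ℤ)) * (a⁻¹ * z ^ (n:ℤ)) := by
          push_cast
          rw [add_comm (n:ℤ) (m:ℤ), zpow_add]
          calc (a * b)⁻¹ * (z ^ (m:ℤ) * z ^ (n:ℤ))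
              = b⁻¹ * ((a⁻¹ * z ^ (m:ℤ)) * z ^ (n:ℤ)) := by
                simp only [mul_inv_rev, mul_assoc]
            _ = b⁻¹ * ((z ^ (m:ℤ) * a⁻¹) * z ^ (n:ℤ)) := by rw [← hcomm (m:ℤ) a⁻¹]
            _ = (b⁻¹ * z ^ (m:ℤ)) * (a⁻¹ * z ^ (n:ℤ)) := by simp only [mul_assoc]
        rw [e]
        exact hP1 _ hmb' _ hna'
    have hinv : ∀ g : G, g ∈ Gprime P z → g⁻¹ ∈ Gprime P z := by
      rintro g ⟨n, hn, hn'⟩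
      refine ⟨n, ?_, ?_⟩
      · unfold leP
        rw [zpow_neg, inv_inv, hcomm]
        exact hn'
      · unfold leP
        rw [inv_inv, ← hcomm]
        have := hn; unfold leP at this; rwa [zpow_neg, inv_inv] at this
    exact ⟨{ carrier := Gprime P z
             one_mem' := hone
             mul_mem' := fun ha hb => hmul _ _ ha hb
             inv_mem' := fun ha => hinv _ ha }, rfl⟩
  · -- unique decomposition
    rintro g ⟨n, hn, hn'⟩
    have hQlo : (z ^ (-(n:ℤ)))⁻¹ * g ∈ P := hn
    have hup : g⁻¹ * z ^ (n:ℤ) ∈ P := hn'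
    -- the set of exponents m with z^m ≤ g
    set Q : ℤ → Prop := fun m => (z ^ m)⁻¹ * g ∈ P with hQ
    have hQinh : Q (-(n:ℤ)) := hQlo
    have hQbdd : ∀ m : ℤ, Q m → m ≤ n := by
      intro m hm
      have hprod : ((z ^ m)⁻¹ * g) * (g⁻¹ * z ^ (n:ℤ)) ∈ P := hP1 _ hm _ hup
      have e : ((z ^ m)⁻¹ * g) * (g⁻¹ * z ^ (n:ℤ)) = z ^ ((n:ℤ) - m) := by
        rw [sub_eq_add_neg, add_comm, zpow_add, zpow_neg]
        group
      rw [e] at hprod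
      have := hnonneg _ hprod
      omega
    obtain ⟨k, hk, hkmax⟩ := Int.exists_greatest_of_bdd ⟨(n:ℤ), hQbdd⟩ ⟨-(n:ℤ), hQinh⟩
    -- Q is downward closed
    have hQdown : ∀ m m' : ℤ, m' ≤ m → Q m → Q m' := by
      intro m m' hle hm
      have h1 : z ^ (m - m') ∈ P := hzpow _ (by omega)
      have hprod : z ^ (m - m') * ((z ^ m)⁻¹ * g) ∈ P := hP1 _ h1 _ hm
      have e : z ^ (m - m') * ((z ^ m)⁻¹ * g) = (z ^ m')⁻¹ * g := by
        rw [sub_eq_add_neg, zpow_add, zpow_neg]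
        group
      rwa [e] at hprod
    set v : G := z ^ (-k) * g with hv
    have hgv : g = z ^ k * v := by
      rw [hv, ← mul_assoc, ← zpow_add]
      simp
    have hv1 : leP P 1 v := by
      unfold leP
      rw [inv_one, one_mul, hv, zpow_neg]
      exact hk
    have hnotQ : ¬ Q (k + 1) := fun h => by have := hkmax _ h; omega
    have hvz : leP P v z := by
      rcases htot v z with h | h
      · exact h
      · -- z ≤ v gives Q (k+1)
        exfalso
        apply hnotQ
        have hzv : z⁻¹ * v ∈ P := h
        have e : (z ^ (k + 1))⁻¹ * g = z⁻¹ * v := by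
          rw [hv, zpow_add, zpow_one, mul_inv_rev, zpow_neg]
          group
        show (z ^ (k + 1))⁻¹ * g ∈ P
        rw [e]; exact hzv
    have hvne : v ≠ z := by
      intro hveq
      apply hnotQ
      show (z ^ (k + 1))⁻¹ * g ∈ P
      have : (z ^ (k + 1))⁻¹ * g = 1 := by
        rw [hgv, hveq, zpow_add, zpow_one]
        group
      rw [this]; exact h1P
    refine ⟨(k, v), ⟨hgv, hv1, hvz, hvne⟩, ?_⟩
    rintro ⟨j, w⟩ ⟨hgw, hw1, hwz, hwne⟩
    simp only at hgw hw1 hwz hwne ⊢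
    have hwP : w ∈ P := by
      have := hw1; unfold leP at this; simpa using this
    have hQj : Q j := by
      show (z ^ j)⁻¹ * g ∈ P
      have e : (z ^ j)⁻¹ * g = w := by rw [hgw]; group
      rw [e]; exact hwP
    have hnotQj1 : ¬ Q (j + 1) := by
      intro hq
      have hq' : (z ^ (j + 1))⁻¹ * g ∈ P := hq
      have e : (z ^ (j + 1))⁻¹ * g = z⁻¹ * w := by
        rw [hgw, zpow_add, zpow_one]
        group
      rw [e] at hq'
      have h2 : z⁻¹ * w ∈ P⁻¹ := by
        rw [Set.mem_inv]
        have := hwz; unfold leP at this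
        simpa [mul_inv_rev] using this
      have h3 : z⁻¹ * w ∈ P ∩ P⁻¹ := ⟨hq', h2⟩
      rw [hP2] at h3
      have : z⁻¹ * w = 1 := h3
      exact hwne (by rw [← inv_mul_cancel z] at this; exact mul_left_cancel this)
    have hjk : j = k := by
      have h1 : j ≤ k := hkmax _ hQj
      have h2 : k ≤ j := by
        by_contra h
        push_neg at h
        exact hnotQj1 (hQdown k (j + 1) (by omega) hk)
      omega
    have hwv : w = v := by
      rw [hv, ← hjk, hgw, zpow_neg]
      group
    exact Prod.ext hjk hwv
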